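/- Let σ > 0, t > 0, μ ∈ ℝ, K' > 0, and x ∈ ℝ. Then ∫_ℝ (−μ) ∂_y[(2πσ²t)^{−1/2} exp(−(x−y)²/(2σ²t))] · max(e^y − K', 0) dy = μ e^{x + σ²t/2} 𝒩((x − log K' + σ²t)/(σ√t)). -/

import Mathlib

open MeasureTheory

/-- The standard normal cumulative distribution function. -/
noncomputable def stdNormalCdf (x : ℝ) : ℝ :=
  ∫ u in Set.Iio x, (Real.sqrt (2 * Real.pi))⁻¹ * Real.exp (-u ^ 2 / 2)

/-- The Gaussian kernel `p_σ(t,x,y) := (2πσ²t)^{−1/2} exp(−(x−y)²/(2σ²t))`. -/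
noncomputable def gaussKer (σ t x y : ℝ) : ℝ :=
  (Real.sqrt (2 * Real.pi * σ ^ 2 * t))⁻¹ * Real.exp (-(x - y) ^ 2 / (2 * σ ^ 2 * t))

section Aux
open Set Real Filter

lemma myIoiTrans (f : ℝ → ℝ) (b c : ℝ) :
    ∫ x in Ioi b, f (x + c) = ∫ x in Ioi (b + c), f x := by
  have A : MeasurableEmbedding fun x : ℝ => x + c :=
    (Homeomorph.addRight c).isClosedEmbedding.measurableEmbedding
  have h := A.setIntegral_map (μ := volume) f (Ioi (b + c))
  rw [map_add_right_eq_self volume c] at h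
  rw [h]; congr 1; ext y; simp [lt_sub_iff_add_lt]

lemma gaussKer_hasDerivAt (σ t x y : ℝ) (hσ : 0 < σ) (ht : 0 < t) :
    HasDerivAt (fun y' => gaussKer σ t x y')
      (gaussKer σ t x y * ((x - y) / (σ ^ 2 * t))) y := by
  have hA : (2 * σ ^ 2 * t) ≠ 0 := by positivity
  have h1 : HasDerivAt (fun y' => x - y') (-1) y := (hasDerivAt_id y).const_sub x
  have h2 := h1.pow 2
  have h3 := (h2.neg.div_const (2 * σ ^ 2 * t)).exp
  have h4 := h3.const_mul (Real.sqrt (2 * Real.pi * σ ^ 2 * t))⁻¹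
  convert h4 using 1
  · rfl
  · rfl
  · rfl
  unfold gaussKer
  simp only [Pi.neg_apply, Pi.pow_apply]
  field_simp
  ring

lemma gaussKer_eq (σ t c y : ℝ) :
    gaussKer σ t c y
      = (Real.sqrt (2 * Real.pi * σ ^ 2 * t))⁻¹ * Real.exp (-(2 * σ ^ 2 * t)⁻¹ * (y - c) ^ 2) := by
  unfold gaussKer
  congr 1
  rw [neg_div, div_eq_inv_mul]
  ring_nf

lemma gaussKer_integrable (σ t c : ℝ) (hσ : 0 < σ) (ht : 0 < t) :
    Integrable (fun y => gaussKer σ t c y) := by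
  have hb : (0:ℝ) < (2 * σ ^ 2 * t)⁻¹ := by positivity
  have h := ((integrable_exp_neg_mul_sq hb).comp_sub_right c).const_mul
      (Real.sqrt (2 * Real.pi * σ ^ 2 * t))⁻¹
  exact h.congr (Filter.Eventually.of_forall fun y => (gaussKer_eq σ t c y).symm)

lemma gaussKer_integrable_lin (σ t c x : ℝ) (hσ : 0 < σ) (ht : 0 < t) :
    Integrable (fun y => (x - y) * gaussKer σ t c y) := by
  have hb : (0:ℝ) < (2 * σ ^ 2 * t)⁻¹ := by positivity
  have h1 : Integrable (fun y : ℝ => (y - c) * Real.exp (-(2 * σ ^ 2 * t)⁻¹ * (y - c) ^ 2)) :=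
    (integrable_mul_exp_neg_mul_sq hb).comp_sub_right c
  have h2 := (gaussKer_integrable σ t c hσ ht).const_mul (x - c)
  have h3 := h1.const_mul (Real.sqrt (2 * Real.pi * σ ^ 2 * t))⁻¹
  refine (h2.sub h3).congr (Filter.Eventually.of_forall fun y => ?_)
  simp only [Pi.sub_apply]
  rw [gaussKer_eq σ t c]
  ring

lemma gaussKer_mul_exp (σ t x : ℝ) (hσ : 0 < σ) (ht : 0 < t) (y : ℝ) :
    gaussKer σ t x y * Real.exp y
      = Real.exp (x + σ ^ 2 * t / 2) * gaussKer σ t (x + σ ^ 2 * t) y := by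
  have hA : (2 * σ ^ 2 * t) ≠ 0 := by positivity
  unfold gaussKer
  rw [mul_assoc, ← Real.exp_add, mul_left_comm, ← Real.exp_add]
  congr 1
  field_simp
  ring

lemma gaussKer_tendsto (σ t c : ℝ) (hσ : 0 < σ) (ht : 0 < t) :
    Tendsto (fun y => gaussKer σ t c y) atTop (nhds 0) := by
  have hb : (0:ℝ) < (2 * σ ^ 2 * t)⁻¹ := by positivity
  have h1 : Tendsto (fun y : ℝ => -(2 * σ ^ 2 * t)⁻¹ * (y - c) ^ 2) atTop atBot := by
    apply Tendsto.const_mul_atTop_of_neg (neg_lt_zero.mpr hb)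
    exact (tendsto_pow_atTop (by norm_num)).comp (tendsto_atTop_add_const_right _ (-c) tendsto_id)
  have h2 := (Real.tendsto_exp_atBot).comp h1
  have h3 := h2.const_mul (Real.sqrt (2 * Real.pi * σ ^ 2 * t))⁻¹
  rw [mul_zero] at h3
  exact h3.congr fun y => by rw [gaussKer_eq]; rfl

lemma gaussKer_integral_Ioi (σ t m a : ℝ) (hσ : 0 < σ) (ht : 0 < t) :
    ∫ y in Ioi a, gaussKer σ t m y = stdNormalCdf ((m - a) / (σ * Real.sqrt t)) := by
  set s := σ * Real.sqrt t with hs_def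
  have hs : 0 < s := by positivity
  have hs2 : s ^ 2 = σ ^ 2 * t := by
    rw [hs_def, mul_pow, sq_sqrt ht.le]
  set φ : ℝ → ℝ := fun u => (Real.sqrt (2 * Real.pi))⁻¹ * Real.exp (-u ^ 2 / 2) with hφ
  set g : ℝ → ℝ := fun u => s⁻¹ * φ (u - m / s) with hg
  have key : ∀ y, gaussKer σ t m y = g (s⁻¹ * y) := by
    intro y
    rw [hg, hφ]
    simp only
    unfold gaussKer
    have hconst : (Real.sqrt (2 * Real.pi * σ ^ 2 * t))⁻¹ = s⁻¹ * (Real.sqrt (2 * Real.pi))⁻¹ := by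
      rw [← mul_inv]
      congr 1
      rw [mul_assoc, ← hs2, show (2:ℝ) * Real.pi * s ^ 2 = (2 * Real.pi) * s ^ 2 by ring,
        Real.sqrt_mul (by positivity), Real.sqrt_sq hs.le, mul_comm]
    rw [hconst, mul_assoc]
    congr 2
    have h2 : (2:ℝ) * σ ^ 2 * t = 2 * s ^ 2 := by rw [hs2]; ring
    rw [h2]
    field_simp
    ring
  calc ∫ y in Ioi a, gaussKer σ t m y = ∫ y in Ioi a, g (s⁻¹ * y) := by
        exact setIntegral_congr_fun measurableSet_Ioi fun y _ => key y
    _ = (s⁻¹)⁻¹ • ∫ u in Ioi (s⁻¹ * a), g u := integral_comp_mul_left_Ioi g a (inv_pos.mpr hs)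
    _ = ∫ u in Ioi (s⁻¹ * a), φ (u - m / s) := by
        rw [inv_inv, hg]
        rw [MeasureTheory.integral_const_mul]
        rw [smul_eq_mul, ← mul_assoc, mul_inv_cancel₀ hs.ne', one_mul]
    _ = ∫ u in Ioi (s⁻¹ * a + -(m / s)), φ u := by
        simp_rw [sub_eq_add_neg]
        exact myIoiTrans φ _ _
    _ = ∫ u in Ioi (-((m - a) / s)), φ u := by
        congr 1
        field_simp
        ring
    _ = ∫ u in Ioi (-((m - a) / s)), φ (-u) := by
        refine setIntegral_congr_fun measurableSet_Ioi fun u _ => ?_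
        rw [hφ]; simp only [neg_sq]
    _ = ∫ u in Iic ((m - a) / s), φ u := by
        rw [integral_comp_neg_Ioi, neg_neg]
    _ = stdNormalCdf ((m - a) / s) := by
        rw [stdNormalCdf, ← integral_Iic_eq_integral_Iio]
end Aux

section Main
open Set Real Filter

/-- For `σ, t > 0`, `μ ∈ ℝ`, `K' > 0` and `x ∈ ℝ`,
`∫ (−μ) ∂_y[p_σ(t,x,y)] max(e^y − K', 0) dy = μ e^{x+σ²t/2} 𝒩((x − log K' + σ²t)/(σ√t))`. -/
theorem stmt_16 (σ t μ K' x : ℝ) (hσ : 0 < σ) (ht : 0 < t) (hK' : 0 < K') :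
    (∫ y : ℝ, (-μ) * deriv (fun y' => gaussKer σ t x y') y * max (Real.exp y - K') 0)
      = μ * Real.exp (x + σ ^ 2 * t / 2)
          * stdNormalCdf ((x - Real.log K' + σ ^ 2 * t) / (σ * Real.sqrt t)) := by
  have hA : (σ ^ 2 * t) ≠ 0 := by positivity
  set a := Real.log K' with ha
  set m := x + σ ^ 2 * t with hm
  set C := Real.exp (x + σ ^ 2 * t / 2) with hC
  set p' : ℝ → ℝ := fun y => gaussKer σ t x y * ((x - y) / (σ ^ 2 * t)) with hp'
  have hd : ∀ y, deriv (fun y' => gaussKer σ t x y') y = p' y :=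
    fun y => (gaussKer_hasDerivAt σ t x y hσ ht).deriv
  -- rewrite integrand as indicator
  have hind : (fun y : ℝ => (-μ) * deriv (fun y' => gaussKer σ t x y') y * max (Real.exp y - K') 0)
      = Set.indicator (Ioi a) (fun y => (-μ) * (p' y * (Real.exp y - K'))) := by
    funext y
    rw [hd]
    by_cases hy : y ∈ Ioi a
    · rw [Set.indicator_of_mem hy]
      have : K' < Real.exp y := by
        rw [← Real.exp_log hK']
        exact Real.exp_lt_exp.mpr hy
      rw [max_eq_left (by linarith)]
      ring
    · rw [Set.indicator_of_notMem hy]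
      have hy' : y ≤ a := not_lt.mp hy
      have : Real.exp y ≤ K' := by
        rw [← Real.exp_log hK']
        exact Real.exp_le_exp.mpr hy'
      rw [max_eq_right (by linarith)]
      ring
  rw [hind, integral_indicator measurableSet_Ioi, integral_const_mul]
  -- integrability facts
  have intA : IntegrableOn (fun y => gaussKer σ t x y * Real.exp y) (Ioi a) := by
    refine (((gaussKer_integrable σ t m hσ ht).const_mul C).congr
      (Filter.Eventually.of_forall fun y => ?_)).integrableOn
    exact (gaussKer_mul_exp σ t x hσ ht y).symm
  have intB : IntegrableOn (fun y => p' y * (Real.exp y - K')) (Ioi a) := by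
    refine ((((gaussKer_integrable_lin σ t m x hσ ht).const_mul (C / (σ ^ 2 * t))).sub
      ((gaussKer_integrable_lin σ t x x hσ ht).const_mul (K' / (σ ^ 2 * t)))).congr
      (Filter.Eventually.of_forall fun y => ?_)).integrableOn
    simp only [Pi.sub_apply]
    rw [hp']
    simp only
    have h1 := gaussKer_mul_exp σ t x hσ ht y
    field_simp
    rw [hC, hm]
    linear_combination (y - x) * h1
  -- tendsto
  have htend : Tendsto (fun y => gaussKer σ t x y * (Real.exp y - K')) atTop (nhds 0) := by
    have h1 := (gaussKer_tendsto σ t m hσ ht).const_mul C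
    have h2 := (gaussKer_tendsto σ t x hσ ht).const_mul K'
    rw [mul_zero] at h1 h2
    have := h1.sub h2
    rw [sub_zero] at this
    refine this.congr fun y => ?_
    rw [← gaussKer_mul_exp σ t x hσ ht y]
    ring
  -- IBP
  have hderivF : ∀ y, HasDerivAt (fun y' => gaussKer σ t x y' * (Real.exp y' - K'))
      (p' y * (Real.exp y - K') + gaussKer σ t x y * Real.exp y) y := by
    intro y
    have := (gaussKer_hasDerivAt σ t x y hσ ht).mul ((Real.hasDerivAt_exp y).sub_const K')
    exact this
  have hibp : ∫ y in Ioi a, (p' y * (Real.exp y - K') + gaussKer σ t x y * Real.exp y)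
      = 0 - gaussKer σ t x a * (Real.exp a - K') :=
    integral_Ioi_of_hasDerivAt_of_tendsto' (fun y _ => hderivF y) (intB.add intA) htend
  have hFa : gaussKer σ t x a * (Real.exp a - K') = 0 := by
    rw [ha, Real.exp_log hK', sub_self, mul_zero]
  rw [hFa, sub_zero] at hibp
  rw [integral_add intB intA] at hibp
  have hgauss : ∫ y in Ioi a, gaussKer σ t x y * Real.exp y
      = C * stdNormalCdf ((m - a) / (σ * Real.sqrt t)) := by
    rw [setIntegral_congr_fun measurableSet_Ioi fun y _ => gaussKer_mul_exp σ t x hσ ht y,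
      integral_const_mul, gaussKer_integral_Ioi σ t m a hσ ht]
  have : ∫ y in Ioi a, p' y * (Real.exp y - K')
      = -(C * stdNormalCdf ((m - a) / (σ * Real.sqrt t))) := by
    rw [← hgauss]; linarith
  rw [this]
  have harg : (m - a) / (σ * Real.sqrt t) = (x - Real.log K' + σ ^ 2 * t) / (σ * Real.sqrt t) := by
    rw [hm, ha]; ring_nf
  rw [harg]
  ring

end Main
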